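/- Let A be a finite alphabet and let u, u', v, v', g ∈ A* with u ≠ u' or v ≠ v'. Then u g v = u' g v' holds if and only if there exist words α ∈ A*, β ∈ A⁺ (β nonempty), and n ∈ ℕ such that exactly one of the following holds: (i) u = u' α β, v' = β α v, and g = (αβ)^n α; or (ii) u' = u α β, v = β α v', and g = (αβ)^n α. -/
import Mathlib


open scoped ENNReal

/-- Length of a longest common prefix of `w` and `w'`. -/
noncomputable def lcpLen {A : Type*} (w w' : List A) : ℕ :=
  sSup {n | ∃ p : List A, p.length = n ∧ p <+: w ∧ p <+: w'}

/-- The prefix distance `d_P(w,w') = |w| + |w'| - 2|w ∧ w'|`. -/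
noncomputable def dP {A : Type*} (w w' : List A) : ℕ :=
  w.length + w'.length - 2 * lcpLen w w'

/-- Length of a longest common suffix of `w` and `w'`. -/
noncomputable def lcsLen {A : Type*} (w w' : List A) : ℕ :=
  sSup {n | ∃ s : List A, s.length = n ∧ s <:+ w ∧ s <:+ w'}

/-- The suffix distance `d_S(w,w') = |w| + |w'| - 2|s|`. -/
noncomputable def dS {A : Type*} (w w' : List A) : ℕ :=
  w.length + w'.length - 2 * lcsLen w w'

/-- Length of a longest common factor of `w` and `w'`. -/
noncomputable def lcfLen {A : Type*} (w w' : List A) : ℕ :=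
  sSup {n | ∃ f : List A, f.length = n ∧ f <:+: w ∧ f <:+: w'}

/-- The factor distance `d_F(w,w') = |w| + |w'| - 2|f|`,
`f` a maximum-length common factor. -/
noncomputable def dF {A : Type*} (w w' : List A) : ℕ :=
  w.length + w'.length - 2 * lcfLen w w'

/-- `n`-fold composition of a binary relation. -/
def relPow {α : Type*} (r : α → α → Prop) : ℕ → α → α → Prop
  | 0 => Eq
  | n + 1 => Relation.Comp (relPow r n) r

/-- `X` is a (variable-length) code: every word of `X*` factorizes uniquely over `X`. -/
def IsCode {A : Type*} (X : Set (List A)) : Prop :=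
  ∀ l m : List (List A), (∀ x ∈ l, x ∈ X) → (∀ x ∈ m, x ∈ X) →
    l.flatten = m.flatten → l = m

/-- `X` is complete: every word is a factor of some word of `X*`. -/
def IsCompleteSet {A : Type*} (X : Set (List A)) : Prop :=
  ∀ w : List A, ∃ l : List (List A), (∀ x ∈ l, x ∈ X) ∧ w <:+: l.flatten

/-- `X ⊆ A*` is a regular language: accepted by a finite deterministic automaton. -/
def IsRegularLang {A : Type*} (X : Set (List A)) : Prop :=
  ∃ (Q : Type) (_ : Fintype Q) (M : DFA A Q), M.accepts = X

/-- The uniform Bernoulli measure `μ(X) = Σ_{x ∈ X} |A|^{-|x|}`. -/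
noncomputable def mu (A : Type*) [Fintype A] (X : Set (List A)) : ℝ≥0∞ :=
  ∑' x : X, ((Fintype.card A : ℝ≥0∞))⁻¹ ^ (x : List A).length


lemma rep_comm {A : Type*} (x : List A) : ∀ n, x ++ (List.replicate n x).flatten = (List.replicate n x).flatten ++ x
  | 0 => by simp
  | n + 1 => by
    simp only [List.replicate_succ, List.flatten_cons]
    conv_lhs => rw [rep_comm x n]
    simp [List.append_assoc]

lemma suffix_of_suffix_length_le' {A : Type*} {l₁ l₂ l₃ : List A}
    (h1 : l₁ <:+ l₃) (h2 : l₂ <:+ l₃) (h : l₁.length ≤ l₂.length) : l₁ <:+ l₂ := by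
  rw [← List.reverse_prefix] at h1 h2 ⊢
  exact List.prefix_of_prefix_length_le h1 h2 (by simpa using h)

/-- Key conjugacy lemma: `w g = g t` with `w ≠ []` gives the decomposition. -/
lemma key {A : Type*} : ∀ N (g : List A), g.length ≤ N → ∀ w t : List A, w ≠ [] →
    w ++ g = g ++ t →
    ∃ (α β : List A) (n : ℕ), β ≠ [] ∧ w = α ++ β ∧ t = β ++ α ∧
      g = (List.replicate n (α ++ β)).flatten ++ α := by
  intro N
  induction N with
  | zero =>
    intro g hg w t hw h
    have : g = [] := List.length_eq_zero_iff.mp (Nat.le_zero.mp hg)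
    subst this
    refine ⟨[], w, 0, hw, by simp, by simpa using h.symm, by simp⟩
  | succ N ih =>
    intro g hg w t hw h
    by_cases hlen : g.length < w.length
    · -- g is a prefix of w
      have hgw : g <+: w := by
        refine List.prefix_of_prefix_length_le ?_ (List.prefix_append w g) hlen.le
        rw [h]; exact List.prefix_append g t
      obtain ⟨β, hβ⟩ := hgw
      have hβne : β ≠ [] := by
        rintro rfl
        simp only [List.append_nil] at hβ
        rw [hβ] at hlen
        exact lt_irrefl _ hlen
      refine ⟨g, β, 0, hβne, hβ.symm, ?_, by simp⟩
      have h2 : g ++ (β ++ g) = g ++ t := by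
        rw [← List.append_assoc, hβ]; exact h
      exact (List.append_cancel_left h2).symm
    · -- w is a prefix of g
      push_neg at hlen
      have hwg : w <+: g := by
        have h1 : w <+: g ++ t := h ▸ List.prefix_append w g
        exact List.prefix_of_prefix_length_le h1 (List.prefix_append g t) hlen
      obtain ⟨g', hg'⟩ := hwg
      have hwpos : 0 < w.length := List.length_pos_iff.mpr hw
      have hlg : g.length = w.length + g'.length := by rw [← hg']; simp
      have hg'len : g'.length ≤ N := by omega
      have h' : w ++ g' = g' ++ t := by
        have h2 : w ++ (w ++ g') = w ++ (g' ++ t) := by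
          rw [hg', ← List.append_assoc, hg']
          exact h
        exact List.append_cancel_left h2
      obtain ⟨α, β, n, hβ, hwαβ, htβα, hgdec⟩ := ih g' hg'len w t hw h'
      refine ⟨α, β, n + 1, hβ, hwαβ, htβα, ?_⟩
      rw [← hg', hgdec, List.replicate_succ, List.flatten_cons, hwαβ]
      simp [List.append_assoc]

lemma core {A : Type*} (α β v R : List A) (hc : (α++β) ++ R = R ++ (α++β)) :
    α ++ (β ++ (R ++ (α ++ v))) = R ++ (α ++ (β ++ (α ++ v))) := by
  have h2 := congrArg (· ++ (α ++ v)) hc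
  simpa [List.append_assoc] using h2

/-- one direction, in the case `|u'| < |u|` -/
lemma half {A : Type*} {u u' v v' g : List A} (hlt : u'.length < u.length)
    (heq : u ++ g ++ v = u' ++ g ++ v') :
    ∃ (α β : List A) (n : ℕ), β ≠ [] ∧ u = u' ++ α ++ β ∧ v' = β ++ α ++ v ∧
      g = (List.replicate n (α ++ β)).flatten ++ α := by
  have hL := congrArg List.length heq
  simp only [List.length_append] at hL
  -- u' <+: u
  have hu : u' <+: u := by
    have h1 : u' <+: u ++ (g ++ v) := by
      rw [← List.append_assoc, heq, List.append_assoc]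
      exact List.prefix_append u' (g ++ v')
    exact List.prefix_of_prefix_length_le h1 (List.prefix_append u (g ++ v)) hlt.le
  obtain ⟨w, hw⟩ := hu
  have hwne : w ≠ [] := by
    rintro rfl
    simp only [List.append_nil] at hw
    rw [hw] at hlt; exact lt_irrefl _ hlt
  -- v <:+ v'
  have hv : v <:+ v' := by
    have h1 : v <:+ u' ++ g ++ v' := heq ▸ List.suffix_append (u ++ g) v
    exact suffix_of_suffix_length_le' h1 (List.suffix_append (u' ++ g) v') (by omega)
  obtain ⟨t, ht⟩ := hv
  have hwg : w ++ g = g ++ t := by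
    have h2 : u' ++ (w ++ (g ++ v)) = u' ++ (g ++ (t ++ v)) := by
      simpa [← hw, ← ht, List.append_assoc] using heq
    have h3 := List.append_cancel_left h2
    rw [← List.append_assoc, ← List.append_assoc] at h3
    exact List.append_cancel_right h3
  obtain ⟨α, β, n, hβ, hwαβ, htβα, hg⟩ := key g.length g le_rfl w t hwne hwg
  exact ⟨α, β, n, hβ, by rw [← hw, hwαβ, List.append_assoc],
    by rw [← ht, htβα, List.append_assoc], hg⟩

/-- if `u ≠ u'` or `v ≠ v'`, then `u g v = u' g v'` iff there are
`α ∈ A*`, `β ∈ A⁺`, `n ∈ ℕ` such that exactly one of the two conjugacy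
conditions holds. -/
theorem stmt_8 {A : Type*} [Fintype A] (hA : 2 ≤ Fintype.card A)
    (u u' v v' g : List A) (h : u ≠ u' ∨ v ≠ v') :
    u ++ g ++ v = u' ++ g ++ v' ↔
      ∃ (α β : List A) (n : ℕ), β ≠ [] ∧
        Xor'
          (u = u' ++ α ++ β ∧ v' = β ++ α ++ v ∧
            g = (List.replicate n (α ++ β)).flatten ++ α)
          (u' = u ++ α ++ β ∧ v = β ++ α ++ v' ∧
            g = (List.replicate n (α ++ β)).flatten ++ α) := by
  constructor
  · intro heq
    rcases lt_trichotomy u'.length u.length with hlt | heqlen | hlt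
    · obtain ⟨α, β, n, hβ, h1, h2, h3⟩ := half hlt heq
      refine ⟨α, β, n, hβ, Or.inl ⟨⟨h1, h2, h3⟩, ?_⟩⟩
      rintro ⟨h4, -, -⟩
      have l1 := congrArg List.length h1
      have l2 := congrArg List.length h4
      have l3 : 0 < β.length := List.length_pos_iff.mpr hβ
      simp only [List.length_append] at l1 l2
      omega
    · -- equal lengths ⇒ u = u', v = v', contradiction
      exfalso
      have h1 : u ++ (g ++ v) = u' ++ (g ++ v') := by simpa [List.append_assoc] using heq
      obtain ⟨he1, he2⟩ := List.append_inj h1 heqlen.symm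
      exact h.elim (fun hh => hh he1) (fun hh => hh (List.append_cancel_left he2))
    · obtain ⟨α, β, n, hβ, h1, h2, h3⟩ := half hlt heq.symm
      refine ⟨α, β, n, hβ, Or.inr ⟨⟨h1, h2, h3⟩, ?_⟩⟩
      rintro ⟨h4, -, -⟩
      have l1 := congrArg List.length h1
      have l2 := congrArg List.length h4
      have l3 : 0 < β.length := List.length_pos_iff.mpr hβ
      simp only [List.length_append] at l1 l2
      omega
  · rintro ⟨α, β, n, hβ, hx⟩
    rcases hx with ⟨⟨h1, h2, h3⟩, -⟩ | ⟨⟨h1, h2, h3⟩, -⟩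
    · subst h1; subst h2; subst h3
      simp only [List.append_assoc]
      exact congrArg (u' ++ ·) (core α β v _ (rep_comm (α ++ β) n))
    · subst h1; subst h2; subst h3
      simp only [List.append_assoc]
      exact (congrArg (u ++ ·) (core α β v' _ (rep_comm (α ++ β) n))).symm
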